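/- Let T be a linear, trace-preserving, positive map on M_d(ℂ) with a unique stationary state, and suppose τ(T) < 1. Then τ(Z(T)) ≤ 1/(1 − τ(T)), where Z(T) = (id − (T − T^∞))^{-1}. -/

import Mathlib

open Matrix Filter
open scoped ComplexOrder

/-- Trace norm (Schatten 1-norm) of a complex matrix: `tr √(XᴴX)`. -/
noncomputable def traceNorm {d : ℕ} (X : Matrix (Fin d) (Fin d) ℂ) : ℝ :=
  (((Matrix.posSemidef_conjTranspose_mul_self X).1.eigenvectorUnitary : Matrix (Fin d) (Fin d) ℂ) *
    diagonal (((↑) : ℝ → ℂ) ∘ (√·) ∘ (Matrix.posSemidef_conjTranspose_mul_self X).1.eigenvalues) *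
    (star (Matrix.posSemidef_conjTranspose_mul_self X).1.eigenvectorUnitary :
      Matrix (Fin d) (Fin d) ℂ)).trace.re

/-- Linear endomorphisms of `M_d(ℂ)` (superoperators). -/
abbrev MatEnd (d : ℕ) := Module.End ℂ (Matrix (Fin d) (Fin d) ℂ)

/-- Trace-preserving map. -/
def IsTP {d : ℕ} (T : MatEnd d) : Prop := ∀ X, (T X).trace = X.trace

/-- Positive map: maps PSD matrices to PSD matrices. -/
def IsPos {d : ℕ} (T : MatEnd d) : Prop := ∀ X, X.PosSemidef → (T X).PosSemidef

/-- Hermiticity-preserving map. -/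
def IsHP {d : ℕ} (T : MatEnd d) : Prop := ∀ X, (T X)ᴴ = T Xᴴ

/-- Induced 1→1 norm: `sup_{X ≠ 0} ‖T X‖₁ / ‖X‖₁`. -/
noncomputable def norm1to1 {d : ℕ} (T : MatEnd d) : ℝ :=
  sSup {r | ∃ X, X ≠ 0 ∧ r = traceNorm (T X) / traceNorm X}

/-- Trace-norm contraction coefficient: sup over nonzero Hermitian traceless `σ`. -/
noncomputable def tau {d : ℕ} (T : MatEnd d) : ℝ :=
  sSup {r | ∃ σ : Matrix (Fin d) (Fin d) ℂ,
    σ.IsHermitian ∧ σ.trace = 0 ∧ σ ≠ 0 ∧ r = traceNorm (T σ) / traceNorm σ}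

/-- Density matrix: positive semidefinite with unit trace. -/
def IsDensity {d : ℕ} (ρ : Matrix (Fin d) (Fin d) ℂ) : Prop := ρ.PosSemidef ∧ ρ.trace = 1

/-- `Tinf` is the Cesàro-mean fixed point projection of `T`. -/
def IsCesaroProj {d : ℕ} (T Tinf : MatEnd d) : Prop :=
  ∀ X, Tendsto (fun n : ℕ => (n : ℂ)⁻¹ • ∑ k ∈ Finset.range n, (T ^ (k + 1)) X)
    atTop (nhds (Tinf X))

namespace TNAux

variable {d : ℕ} {A B : Matrix (Fin d) (Fin d) ℂ}

/-- conjugation of a real diagonal by the eigenvector unitary of `A`. -/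
noncomputable def mk (hA : A.IsHermitian) (f : Fin d → ℝ) : Matrix (Fin d) (Fin d) ℂ :=
  (hA.eigenvectorUnitary : Matrix (Fin d) (Fin d) ℂ) * diagonal (fun i => (f i : ℂ)) *
    (star hA.eigenvectorUnitary : Matrix (Fin d) (Fin d) ℂ)

lemma mk_eigen (hA : A.IsHermitian) : mk hA hA.eigenvalues = A := by
  rw [mk]; exact hA.spectral_theorem.symm

lemma mk_mul (hA : A.IsHermitian) (f g : Fin d → ℝ) :
    mk hA f * mk hA g = mk hA (fun i => f i * g i) := by
  unfold mk
  have hfun : (fun i => (f i : ℂ) * (g i : ℂ)) = fun i => (((f i * g i : ℝ)) : ℂ) := by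
    ext i; push_cast; ring
  simp only [mul_assoc]
  rw [← mul_assoc (star hA.eigenvectorUnitary : Matrix (Fin d) (Fin d) ℂ),
    Unitary.coe_star_mul_self, one_mul,
    ← mul_assoc (diagonal fun i => ((f i : ℂ))), diagonal_mul_diagonal, hfun]

lemma mk_sub (hA : A.IsHermitian) (f g : Fin d → ℝ) :
    mk hA f - mk hA g = mk hA (fun i => f i - g i) := by
  unfold mk
  rw [← sub_mul, ← mul_sub, diagonal_sub]
  congr 2
  ext i
  push_cast
  ring

lemma mk_trace (hA : A.IsHermitian) (f : Fin d → ℝ) :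
    (mk hA f).trace = ∑ i, (f i : ℂ) := by
  unfold mk
  rw [trace_mul_cycle, Unitary.coe_star_mul_self, one_mul, trace_diagonal]

lemma mk_posSemidef (hA : A.IsHermitian) (f : Fin d → ℝ) (hf : ∀ i, 0 ≤ f i) :
    PosSemidef (mk hA f) := by
  have h1 : PosSemidef (diagonal (fun i => (f i : ℂ))) :=
    posSemidef_diagonal_iff.mpr fun i => by exact_mod_cast hf i
  have := h1.mul_mul_conjTranspose_same (hA.eigenvectorUnitary : Matrix (Fin d) (Fin d) ℂ)
  rwa [← star_eq_conjTranspose] at this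

lemma mk_isHermitian (hA : A.IsHermitian) (f : Fin d → ℝ) : (mk hA f).IsHermitian := by
  unfold mk
  unfold Matrix.IsHermitian
  have hD : (diagonal (fun i => (f i : ℂ)))ᴴ = diagonal (fun i => (f i : ℂ)) := by
    rw [diagonal_conjTranspose]
    have h : (star fun i => ((f i : ℂ))) = fun i => ((f i : ℂ)) := by
      funext i
      simp [Pi.star_apply, Complex.conj_ofReal]
    rw [h]
  rw [star_eq_conjTranspose, conjTranspose_mul, conjTranspose_mul, conjTranspose_conjTranspose,
    hD, mul_assoc]

open scoped MatrixOrder in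
lemma traceNorm_eq_of_sq {X S : Matrix (Fin d) (Fin d) ℂ} (hS : PosSemidef S)
    (h : S ^ 2 = Xᴴ * X) : traceNorm X = S.trace.re := by
  have hP := posSemidef_conjTranspose_mul_self X
  have key : CFC.sqrt (Xᴴ * X) = S := by
    rw [← h]; exact CFC.sqrt_sq S hS.nonneg
  have h2 : CFC.sqrt (Xᴴ * X) = ((hP.1.eigenvectorUnitary : Matrix (Fin d) (Fin d) ℂ) *
      diagonal (((↑) : ℝ → ℂ) ∘ (√·) ∘ hP.1.eigenvalues) *
      (star hP.1.eigenvectorUnitary : Matrix (Fin d) (Fin d) ℂ)) := by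
    rw [CFC.sqrt_eq_cfc, cfc_nnreal_eq_real _ (Xᴴ * X) hP.nonneg, hP.1.cfc_eq, IsHermitian.cfc,
      Unitary.conjStarAlgAut_apply]
    have hf : (RCLike.ofReal ∘ (fun x : ℝ => ((NNReal.sqrt x.toNNReal : ℝ))) ∘ hP.1.eigenvalues :
        Fin d → ℂ) = ((↑) : ℝ → ℂ) ∘ (√·) ∘ hP.1.eigenvalues := by
      funext i
      simp [Real.coe_sqrt, max_eq_left (hP.eigenvalues_nonneg i)]
    rw [hf]
  rw [traceNorm, ← h2, key]

lemma traceNorm_herm (hA : A.IsHermitian) :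
    traceNorm A = ∑ i, |hA.eigenvalues i| := by
  have hS : PosSemidef (mk hA (fun i => |hA.eigenvalues i|)) :=
    mk_posSemidef hA _ fun i => abs_nonneg _
  have hsq : (mk hA (fun i => |hA.eigenvalues i|)) ^ 2 = Aᴴ * A := by
    have hfun : (fun i => |hA.eigenvalues i| * |hA.eigenvalues i|) =
        fun i => hA.eigenvalues i * hA.eigenvalues i := by
      ext i; rw [abs_mul_abs_self]
    rw [pow_two, mk_mul, hA.eq, hfun]
    conv_rhs => rw [← mk_eigen hA, mk_mul]
  rw [traceNorm_eq_of_sq hS hsq, mk_trace]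
  rw [Complex.re_sum]
  norm_num

lemma trace_herm (hA : A.IsHermitian) : A.trace = ∑ i, (hA.eigenvalues i : ℂ) := by
  conv_lhs => rw [← mk_eigen hA]
  exact mk_trace hA _

lemma traceNorm_zero : traceNorm (0 : Matrix (Fin d) (Fin d) ℂ) = 0 := by
  have := traceNorm_eq_of_sq (X := (0 : Matrix (Fin d) (Fin d) ℂ))
    (S := 0) PosSemidef.zero (by simp)
  simpa using this

lemma traceNorm_nonneg_herm (hA : A.IsHermitian) : 0 ≤ traceNorm A := by
  rw [traceNorm_herm hA]
  positivity

lemma traceNorm_pos (hA : A.IsHermitian) (h : A ≠ 0) : 0 < traceNorm A := by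
  rcases (traceNorm_nonneg_herm hA).lt_or_eq with h' | h'
  · exact h'
  exfalso
  apply h
  rw [traceNorm_herm hA] at h'
  have hz : ∀ i, hA.eigenvalues i = 0 := by
    intro i
    have := Finset.sum_eq_zero_iff_of_nonneg (fun i _ => abs_nonneg (hA.eigenvalues i)) |>.mp h'.symm
    simpa using this i (Finset.mem_univ i)
  rw [← mk_eigen hA]
  have hfun : hA.eigenvalues = fun _ => (0 : ℝ) := funext hz
  rw [hfun]
  unfold mk
  simp

lemma traceNorm_psd (hA : PosSemidef A) : traceNorm A = A.trace.re := by
  refine traceNorm_eq_of_sq hA ?_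
  rw [pow_two, hA.1.eq]

open scoped MatrixOrder in
lemma traceNorm_neg_herm (hA : A.IsHermitian) : traceNorm (-A) = traceNorm A := by
  have hP := posSemidef_conjTranspose_mul_self A
  have h : (CFC.sqrt (Aᴴ * A)) ^ 2 = (-A)ᴴ * (-A) := by
    rw [conjTranspose_neg, neg_mul_neg]
    exact CFC.sq_sqrt _ hP.nonneg
  have h' : (CFC.sqrt (Aᴴ * A)) ^ 2 = Aᴴ * A := CFC.sq_sqrt _ hP.nonneg
  have hS : PosSemidef (CFC.sqrt (Aᴴ * A)) := (CFC.sqrt_nonneg _).posSemidef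
  rw [traceNorm_eq_of_sq hS h, traceNorm_eq_of_sq hS h']


lemma retrace_bound (hA : A.IsHermitian) {V : Matrix (Fin d) (Fin d) ℂ}
    (hV : V ∈ Matrix.unitaryGroup (Fin d) ℂ) (s : Fin d → ℝ) (hs : ∀ i, |s i| ≤ 1) :
    ((V * diagonal (fun i => (s i : ℂ)) * star V * A).trace).re ≤ traceNorm A := by
  rw [traceNorm_herm hA]
  set W : Matrix (Fin d) (Fin d) ℂ := (hA.eigenvectorUnitary : Matrix (Fin d) (Fin d) ℂ) with hW
  set M : Matrix (Fin d) (Fin d) ℂ := star V * W with hM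
  set lam := hA.eigenvalues with hlam
  have hWmem : W ∈ Matrix.unitaryGroup (Fin d) ℂ := hA.eigenvectorUnitary.2
  have hMmem : M ∈ Matrix.unitaryGroup (Fin d) ℂ := mul_mem (Unitary.star_mem hV) hWmem
  have hstarM : star W * V = star M := by
    rw [hM, Matrix.star_mul, star_star]
  -- column sums of |M i j|^2 are 1
  have hMcol : ∀ j, ∑ i, Complex.normSq (M i j) = 1 := by
    intro j
    have h1 : (star M * M) j j = 1 := by
      have : star M * M = 1 := (Matrix.mem_unitaryGroup_iff'.mp hMmem)
      rw [this, Matrix.one_apply_eq]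
    rw [Matrix.mul_apply] at h1
    have h2 : ∀ i, (star M) j i * M i j = (Complex.normSq (M i j) : ℂ) := by
      intro i
      rw [Matrix.star_apply, show (star (M i j)) = (starRingEnd ℂ) (M i j) from rfl,
        mul_comm, Complex.mul_conj]
    rw [Finset.sum_congr rfl (fun i _ => h2 i)] at h1
    have := congrArg Complex.re h1
    rw [Complex.re_sum] at this
    simpa using this
  -- trace identity
  have hA' : A = W * diagonal (fun i => (lam i : ℂ)) * star W := hA.spectral_theorem
  have htr : (V * diagonal (fun i => (s i : ℂ)) * star V * A).trace
      = ∑ i, (s i : ℂ) * ∑ j, M i j * ((lam j : ℂ) * star (M i j)) := by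
    conv_lhs => rw [hA']
    have t1 : V * diagonal (fun i => (s i : ℂ)) * star V *
        (W * diagonal (fun i => (lam i : ℂ)) * star W)
        = V * (diagonal (fun i => (s i : ℂ)) * (M * (diagonal (fun i => (lam i : ℂ)) * star W))) := by
      rw [hM]; simp only [mul_assoc]
    rw [t1, trace_mul_comm]
    have t2 : diagonal (fun i => (s i : ℂ)) * (M * (diagonal (fun i => (lam i : ℂ)) * star W)) * V
        = diagonal (fun i => (s i : ℂ)) * (M * (diagonal (fun i => (lam i : ℂ)) * star M)) := by
      rw [← hstarM]; simp only [mul_assoc]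
    rw [t2, Matrix.trace]
    apply Finset.sum_congr rfl
    intro i _
    rw [Matrix.diag_apply, Matrix.diagonal_mul, Matrix.mul_apply]
    congr 1
    apply Finset.sum_congr rfl
    intro j _
    rw [Matrix.diagonal_mul, Matrix.star_apply]
  -- real part computation
  have hre : ((V * diagonal (fun i => (s i : ℂ)) * star V * A).trace).re
      = ∑ i, ∑ j, s i * (lam j * Complex.normSq (M i j)) := by
    rw [htr]
    have hterm : ∀ i, (s i : ℂ) * ∑ j, M i j * ((lam j : ℂ) * star (M i j))
        = ((∑ j, s i * (lam j * Complex.normSq (M i j)) : ℝ) : ℂ) := by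
      intro i
      rw [Finset.mul_sum, Complex.ofReal_sum]
      apply Finset.sum_congr rfl
      intro j _
      rw [show M i j * ((lam j : ℂ) * star (M i j)) = (lam j : ℂ) * (M i j * star (M i j)) from by
        ring]
      rw [show (star (M i j)) = (starRingEnd ℂ) (M i j) from rfl, Complex.mul_conj]
      push_cast
      ring
    rw [Finset.sum_congr rfl (fun i _ => hterm i)]
    rw [← Complex.ofReal_sum, Complex.ofReal_re]
  rw [hre]
  calc ∑ i, ∑ j, s i * (lam j * Complex.normSq (M i j))
      ≤ ∑ i, ∑ j, |lam j| * Complex.normSq (M i j) := by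
        apply Finset.sum_le_sum; intro i _
        apply Finset.sum_le_sum; intro j _
        have hn : (0:ℝ) ≤ Complex.normSq (M i j) := Complex.normSq_nonneg _
        calc s i * (lam j * Complex.normSq (M i j))
            ≤ |s i * (lam j * Complex.normSq (M i j))| := le_abs_self _
          _ = |s i| * (|lam j| * Complex.normSq (M i j)) := by
              rw [abs_mul, abs_mul, abs_of_nonneg hn]
          _ ≤ 1 * (|lam j| * Complex.normSq (M i j)) := by
              apply mul_le_mul_of_nonneg_right (hs i)
              positivity
          _ = |lam j| * Complex.normSq (M i j) := one_mul _
    _ = ∑ j, |lam j| := by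
        rw [Finset.sum_comm]
        apply Finset.sum_congr rfl
        intro j _
        rw [← Finset.mul_sum, hMcol j, mul_one]

lemma traceNorm_add_le (hA : A.IsHermitian) (hB : B.IsHermitian) :
    traceNorm (A + B) ≤ traceNorm A + traceNorm B := by
  have hC : (A + B).IsHermitian := hA.add hB
  set μ := hC.eigenvalues with hμ
  set s : Fin d → ℝ := fun i => if μ i < 0 then -1 else 1 with hs_def
  have hs : ∀ i, |s i| ≤ 1 := by
    intro i; rw [hs_def]; dsimp only; split <;> simp
  have hsmul : ∀ i, s i * μ i = |μ i| := by
    intro i; rw [hs_def]; dsimp only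
    split
    · next h => rw [abs_of_neg h]; ring
    · next h => rw [abs_of_nonneg (not_lt.mp h)]; ring
  have hprod : (mk hC s) * (A + B) = mk hC (fun i => s i * μ i) := by
    rw [← mk_mul, mk_eigen]
  have htrSC : ((mk hC s) * (A + B)).trace.re = ∑ i, |μ i| := by
    rw [hprod, mk_trace, Complex.re_sum]
    apply Finset.sum_congr rfl
    intro i _
    show ((s i * μ i : ℝ) : ℂ).re = |μ i|
    rw [Complex.ofReal_re]
    exact hsmul i
  have h1 : traceNorm (A + B) = ((mk hC s) * (A + B)).trace.re := by
    rw [traceNorm_herm hC, htrSC]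
  have h2 : (mk hC s) * (A + B) = (mk hC s) * A + (mk hC s) * B := mul_add _ _ _
  rw [h1, h2, trace_add, Complex.add_re]
  have hbA : ((mk hC s) * A).trace.re ≤ traceNorm A := by
    have := retrace_bound hA hC.eigenvectorUnitary.2 s hs
    simpa [mk] using this
  have hbB : ((mk hC s) * B).trace.re ≤ traceNorm B := by
    have := retrace_bound hB hC.eigenvectorUnitary.2 s hs
    simpa [mk] using this
  exact add_le_add hbA hbB

lemma jordan (hA : A.IsHermitian) :
    ∃ (P Q : Matrix (Fin d) (Fin d) ℂ) (p q : ℝ), PosSemidef P ∧ PosSemidef Q ∧ A = P - Q ∧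
      P.trace = (p : ℂ) ∧ Q.trace = (q : ℂ) ∧ p + q = traceNorm A ∧ (p : ℂ) - q = A.trace := by
  refine ⟨mk hA (fun i => max (hA.eigenvalues i) 0), mk hA (fun i => max (-hA.eigenvalues i) 0),
    ∑ i, max (hA.eigenvalues i) 0, ∑ i, max (-hA.eigenvalues i) 0,
    mk_posSemidef _ _ (fun i => le_max_right _ _), mk_posSemidef _ _ (fun i => le_max_right _ _),
    ?_, ?_, ?_, ?_, ?_⟩
  · rw [mk_sub]
    have hfun : (fun i => max (hA.eigenvalues i) 0 - max (-hA.eigenvalues i) 0)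
        = hA.eigenvalues := by
      funext i
      rcases le_total (hA.eigenvalues i) 0 with h | h
      · rw [max_eq_right h, max_eq_left (by linarith)]; ring
      · rw [max_eq_left h, max_eq_right (by linarith)]; ring
    rw [hfun, mk_eigen]
  · rw [mk_trace, Complex.ofReal_sum]
  · rw [mk_trace, Complex.ofReal_sum]
  · rw [traceNorm_herm hA, ← Finset.sum_add_distrib]
    apply Finset.sum_congr rfl
    intro i _
    rcases le_total (hA.eigenvalues i) 0 with h | h
    · rw [max_eq_right h, max_eq_left (by linarith), abs_of_nonpos h]; ring
    · rw [max_eq_left h, max_eq_right (by linarith), abs_of_nonneg h]; ring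
  · rw [trace_herm hA, ← Complex.ofReal_sum, ← Complex.ofReal_sub, ← Finset.sum_sub_distrib]
    norm_cast
    apply Finset.sum_congr rfl
    intro i _
    rcases le_total (hA.eigenvalues i) 0 with h | h
    · rw [max_eq_right h, max_eq_left (by linarith)]; ring
    · rw [max_eq_left h, max_eq_right (by linarith)]; ring

/-- A PSD matrix with zero trace is zero. -/
lemma psd_eq_zero_of_trace (hA : PosSemidef A) (h : A.trace.re = 0) : A = 0 := by
  by_contra hne
  have h1 := traceNorm_pos hA.1 hne
  rw [traceNorm_psd hA, h] at h1
  exact lt_irrefl _ h1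

/-- Positive trace-preserving maps are trace-norm contractions on Hermitian matrices. -/
lemma traceNorm_map_le {T : Module.End ℂ (Matrix (Fin d) (Fin d) ℂ)}
    (hTP : ∀ X, (T X).trace = X.trace) (hPos : ∀ X, X.PosSemidef → (T X).PosSemidef)
    (hA : A.IsHermitian) : traceNorm (T A) ≤ traceNorm A := by
  obtain ⟨P, Q, p, q, hP, hQ, hPQ, htP, htQ, hpq, _⟩ := jordan hA
  have hTA : T A = T P + -(T Q) := by rw [hPQ, map_sub, sub_eq_add_neg]
  have hTPpsd := hPos P hP
  have hTQpsd := hPos Q hQ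
  calc traceNorm (T A) ≤ traceNorm (T P) + traceNorm (-(T Q)) := by
        rw [hTA]; exact traceNorm_add_le hTPpsd.1 hTQpsd.1.neg
    _ = (T P).trace.re + (T Q).trace.re := by
        rw [traceNorm_neg_herm hTQpsd.1, traceNorm_psd hTPpsd, traceNorm_psd hTQpsd]
    _ = p + q := by rw [hTP P, hTP Q, htP, htQ, Complex.ofReal_re, Complex.ofReal_re]
    _ = traceNorm A := hpq

/-- Positive maps preserve Hermiticity. -/
lemma hp_of_pos {T : Module.End ℂ (Matrix (Fin d) (Fin d) ℂ)}
    (hPos : ∀ X, X.PosSemidef → (T X).PosSemidef) (X : Matrix (Fin d) (Fin d) ℂ) :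
    (T X)ᴴ = T Xᴴ := by
  have hherm : ∀ Y : Matrix (Fin d) (Fin d) ℂ, Y.IsHermitian → (T Y).IsHermitian := by
    intro Y hY
    obtain ⟨P, Q, p, q, hP, hQ, hPQ, -, -, -, -⟩ := jordan hY
    rw [hPQ, map_sub]
    exact (hPos P hP).1.sub (hPos Q hQ).1
  obtain ⟨H, hH⟩ : ∃ H : Matrix (Fin d) (Fin d) ℂ, H = (2⁻¹ : ℂ) • (X + Xᴴ) := ⟨_, rfl⟩
  obtain ⟨K, hK⟩ : ∃ K : Matrix (Fin d) (Fin d) ℂ, K = (-(2⁻¹) * Complex.I) • (X - Xᴴ) :=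
    ⟨_, rfl⟩
  have hHh : H.IsHermitian := by
    rw [hH, IsHermitian, conjTranspose_smul, conjTranspose_add, conjTranspose_conjTranspose]
    rw [show star (2⁻¹ : ℂ) = (2⁻¹ : ℂ) from by simp, add_comm]
  have hKh : K.IsHermitian := by
    rw [hK, IsHermitian, conjTranspose_smul, conjTranspose_sub, conjTranspose_conjTranspose]
    have h1 : star (-(2⁻¹) * Complex.I) = (2⁻¹ : ℂ) * Complex.I := by
      simp [Complex.star_def]
    rw [h1]
    rw [show Xᴴ - X = -(X - Xᴴ) from (neg_sub _ _).symm]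
    rw [smul_neg, ← neg_smul]
    congr 1
    ring
  have hXeq : X = H + Complex.I • K := by
    rw [hH, hK]
    match_scalars <;>
      first
        | linear_combination (2⁻¹ : ℂ) * Complex.I_mul_I
        | linear_combination (-(2⁻¹) : ℂ) * Complex.I_mul_I
        | ring
  have hXconj : Xᴴ = H - Complex.I • K := by
    rw [hXeq, conjTranspose_add, hHh.eq, conjTranspose_smul, hKh.eq]
    rw [show star Complex.I = -Complex.I from by simp [Complex.star_def], neg_smul]
    abel
  have hTH := hherm H hHh
  have hTK := hherm K hKh
  rw [hXconj, hXeq, map_add, _root_.map_smul, map_sub, _root_.map_smul]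
  rw [conjTranspose_add, hTH.eq, conjTranspose_smul, hTK.eq,
    show star Complex.I = -Complex.I from by simp [Complex.star_def], neg_smul]
  abel

end TNAux

namespace CesaroAux

open TNAux

variable {d : ℕ} {T Tinf : MatEnd d}

/-- The Cesàro means. -/
noncomputable def Mn (T : MatEnd d) (n : ℕ)
    (X : Matrix (Fin d) (Fin d) ℂ) : Matrix (Fin d) (Fin d) ℂ :=
  (n : ℂ)⁻¹ • ∑ k ∈ Finset.range n, (T ^ (k + 1)) X

lemma pow_trace (hTP : IsTP T) :
    ∀ (k : ℕ) (X : Matrix (Fin d) (Fin d) ℂ), ((T ^ k) X).trace = X.trace := by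
  intro k
  induction k with
    | zero => intro X; rw [pow_zero, Module.End.one_apply]
    | succ k ih =>
      intro X
      rw [pow_succ', Module.End.mul_apply, hTP, ih]

lemma pow_psd (hPos : IsPos T) :
    ∀ (k : ℕ) (X : Matrix (Fin d) (Fin d) ℂ), X.PosSemidef → ((T ^ k) X).PosSemidef := by
  intro k
  induction k with
    | zero => intro X hX; rwa [pow_zero, Module.End.one_apply]
    | succ k ih =>
      intro X hX
      rw [pow_succ', Module.End.mul_apply]
      exact hPos _ (ih X hX)

lemma pow_hp (hHP : ∀ X, (T X)ᴴ = T Xᴴ) :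
    ∀ (k : ℕ) (X : Matrix (Fin d) (Fin d) ℂ), ((T ^ k) X)ᴴ = (T ^ k) Xᴴ := by
  intro k
  induction k with
    | zero => intro X; rw [pow_zero, Module.End.one_apply, Module.End.one_apply]
    | succ k ih =>
      intro X
      rw [pow_succ', Module.End.mul_apply, Module.End.mul_apply, hHP, ih]

lemma psd_smul_real {A : Matrix (Fin d) (Fin d) ℂ} (hA : A.PosSemidef) {c : ℝ} (hc : 0 ≤ c) :
    ((c : ℂ) • A).PosSemidef := by
  constructor
  · rw [IsHermitian, conjTranspose_smul, hA.1.eq, Complex.star_def, Complex.conj_ofReal]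
  · intro x
    exact (hA.smul (show (0:ℂ) ≤ (c:ℂ) by exact_mod_cast hc)).2 x

lemma Mn_psd (hPos : IsPos T) (n : ℕ)
    {X : Matrix (Fin d) (Fin d) ℂ} (hX : X.PosSemidef) : (Mn T n X).PosSemidef := by
  have hsum : (∑ k ∈ Finset.range n, (T ^ (k + 1)) X).PosSemidef := by
    classical
    induction (Finset.range n) using Finset.induction with
      | empty => simpa using Matrix.PosSemidef.zero
      | insert _ _ hnm ih =>
        rw [Finset.sum_insert hnm]
        exact (pow_psd hPos _ _ hX).add ih
  have hcast : ((n : ℂ))⁻¹ = (((n : ℝ)⁻¹ : ℝ) : ℂ) := by push_cast; ring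
  rw [Mn, hcast]
  exact psd_smul_real hsum (by positivity)

lemma tendsto_inv_smul_of_bound {f : ℕ → Matrix (Fin d) (Fin d) ℂ} {c : ℝ}
    (hb : ∀ n i j, ‖f n i j‖ ≤ c) :
    Tendsto (fun n : ℕ => (n : ℂ)⁻¹ • f n) atTop (nhds 0) := by
  apply tendsto_pi_nhds.mpr
  intro i
  rw [tendsto_pi_nhds]
  intro j
  have h0 : ∀ n : ℕ, ‖((n : ℂ)⁻¹ • f n) i j‖ ≤ c / n := by
    intro n
    rw [Matrix.smul_apply, smul_eq_mul, norm_mul]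
    have h1 : ‖((n:ℕ) : ℂ)⁻¹‖ = ((n:ℝ))⁻¹ := by
      rw [norm_inv, Complex.norm_natCast]
    rw [h1, div_eq_inv_mul]
    exact mul_le_mul_of_nonneg_left (hb n i j) (by positivity)
  have := squeeze_zero_norm h0 (tendsto_const_div_atTop_nhds_zero_nat c)
  simpa using this

/-- entry bound for PSD matrices -/
lemma psd_entry_bound {A : Matrix (Fin d) (Fin d) ℂ} (hA : A.PosSemidef) (i j : Fin d) :
    ‖A i j‖ ≤ A.trace.re := by
  obtain ⟨U, hU⟩ : ∃ U : Matrix (Fin d) (Fin d) ℂ,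
      U = (hA.1.eigenvectorUnitary : Matrix (Fin d) (Fin d) ℂ) := ⟨_, rfl⟩
  have hrow : ∀ a : Fin d, ∑ k, Complex.normSq (U a k) = 1 := by
    intro a
    have h1 : (U * star U) a a = 1 := by
      rw [hU, Matrix.mem_unitaryGroup_iff.mp hA.1.eigenvectorUnitary.2, Matrix.one_apply_eq]
    rw [Matrix.mul_apply] at h1
    have h2 : ∀ k, U a k * (star U) k a = (Complex.normSq (U a k) : ℂ) := by
      intro k
      rw [Matrix.star_apply, show (star (U a k)) = (starRingEnd ℂ) (U a k) from rfl,
        Complex.mul_conj]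
    rw [Finset.sum_congr rfl (fun k _ => h2 k)] at h1
    have := congrArg Complex.re h1
    rw [Complex.re_sum] at this
    simpa using this
  have hUle : ∀ a k : Fin d, ‖U a k‖ ≤ 1 := by
    intro a k
    have h1 : Complex.normSq (U a k) ≤ 1 := by
      rw [← hrow a]
      exact Finset.single_le_sum (fun m _ => Complex.normSq_nonneg _) (Finset.mem_univ k)
    rw [Complex.norm_def]
    exact Real.sqrt_le_one.mpr h1
  have hAij : A i j = ∑ k, U i k * (hA.1.eigenvalues k : ℂ) * star (U j k) := by
    conv_lhs => rw [← mk_eigen hA.1]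
    rw [TNAux.mk, ← hU, Matrix.mul_apply]
    apply Finset.sum_congr rfl
    intro k _
    rw [Matrix.mul_apply, Matrix.star_apply]
    congr 1
    rw [Finset.sum_eq_single k (fun m _ hm => by rw [Matrix.diagonal_apply_ne _ hm, mul_zero])
      (fun h => absurd (Finset.mem_univ k) h)]
    rw [Matrix.diagonal_apply_eq]
  have htr : A.trace.re = ∑ k, hA.1.eigenvalues k := by
    rw [trace_herm hA.1, Complex.re_sum]
    simp
  rw [hAij, htr]
  calc ‖∑ k, U i k * (hA.1.eigenvalues k : ℂ) * star (U j k)‖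
      ≤ ∑ k, ‖U i k * (hA.1.eigenvalues k : ℂ) * star (U j k)‖ := norm_sum_le _ _
    _ ≤ ∑ k, hA.1.eigenvalues k := by
        apply Finset.sum_le_sum
        intro k _
        have hev := hA.eigenvalues_nonneg k
        rw [norm_mul, norm_mul, norm_star]
        rw [show ‖((hA.1.eigenvalues k : ℝ) : ℂ)‖ = |hA.1.eigenvalues k| from
          Complex.norm_real _, abs_of_nonneg hev]
        calc ‖U i k‖ * hA.1.eigenvalues k * ‖U j k‖
            ≤ 1 * hA.1.eigenvalues k * 1 :=
              mul_le_mul (mul_le_mul (hUle i k) le_rfl hev (by norm_num))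
                (hUle j k) (norm_nonneg _) (by positivity)
          _ = hA.1.eigenvalues k := by ring

lemma tendsto_inv_smul_pow_psd (hTP : IsTP T) (hPos : IsPos T)
    {R : Matrix (Fin d) (Fin d) ℂ} (hR : R.PosSemidef) :
    Tendsto (fun n : ℕ => (n : ℂ)⁻¹ • (T ^ (n + 1)) R) atTop (nhds 0) := by
  apply tendsto_inv_smul_of_bound (c := R.trace.re)
  intro n i j
  have h1 : ((T ^ (n + 1)) R).PosSemidef := pow_psd hPos _ _ hR
  have h2 := psd_entry_bound h1 i j
  rwa [pow_trace hTP] at h2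

lemma exists_herm_decomp (X : Matrix (Fin d) (Fin d) ℂ) :
    ∃ H K : Matrix (Fin d) (Fin d) ℂ, H.IsHermitian ∧ K.IsHermitian ∧
      X = H + Complex.I • K := by
  obtain ⟨H, hH⟩ : ∃ H : Matrix (Fin d) (Fin d) ℂ, H = (2⁻¹ : ℂ) • (X + Xᴴ) := ⟨_, rfl⟩
  obtain ⟨K, hK⟩ : ∃ K : Matrix (Fin d) (Fin d) ℂ, K = (-(2⁻¹) * Complex.I) • (X - Xᴴ) :=
    ⟨_, rfl⟩
  refine ⟨H, K, ?_, ?_, ?_⟩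
  · rw [hH, IsHermitian, conjTranspose_smul, conjTranspose_add, conjTranspose_conjTranspose]
    rw [show star (2⁻¹ : ℂ) = (2⁻¹ : ℂ) from by simp, add_comm]
  · rw [hK, IsHermitian, conjTranspose_smul, conjTranspose_sub, conjTranspose_conjTranspose]
    have h1 : star (-(2⁻¹) * Complex.I) = (2⁻¹ : ℂ) * Complex.I := by
      simp [Complex.star_def]
    rw [h1]
    rw [show Xᴴ - X = -(X - Xᴴ) from (neg_sub _ _).symm]
    rw [smul_neg, ← neg_smul]
    congr 1
    ring
  · rw [hH, hK]
    match_scalars <;>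
      first
        | linear_combination (2⁻¹ : ℂ) * Complex.I_mul_I
        | linear_combination (-(2⁻¹) : ℂ) * Complex.I_mul_I
        | ring

lemma tendsto_inv_smul_pow (hTP : IsTP T) (hPos : IsPos T) (X : Matrix (Fin d) (Fin d) ℂ) :
    Tendsto (fun n : ℕ => (n : ℂ)⁻¹ • (T ^ (n + 1)) X) atTop (nhds 0) := by
  obtain ⟨H, K, hH, hK, hXeq⟩ := exists_herm_decomp X
  obtain ⟨P1, Q1, p1, q1, hP1, hQ1, hPQ1, -, -, -, -⟩ := TNAux.jordan hH
  obtain ⟨P2, Q2, p2, q2, hP2, hQ2, hPQ2, -, -, -, -⟩ := TNAux.jordan hK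
  have heq : (fun n : ℕ => (n : ℂ)⁻¹ • (T ^ (n + 1)) X)
      = fun n : ℕ => ((n : ℂ)⁻¹ • (T ^ (n + 1)) P1 - (n : ℂ)⁻¹ • (T ^ (n + 1)) Q1)
        + Complex.I • ((n : ℂ)⁻¹ • (T ^ (n + 1)) P2 - (n : ℂ)⁻¹ • (T ^ (n + 1)) Q2) := by
    funext n
    rw [hXeq, hPQ1, hPQ2, map_add, _root_.map_smul, map_sub, map_sub]
    rw [smul_add, smul_sub, smul_comm ((n : ℂ)⁻¹) Complex.I, smul_sub]
  rw [heq]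
  have h1 := (tendsto_inv_smul_pow_psd hTP hPos hP1).sub (tendsto_inv_smul_pow_psd hTP hPos hQ1)
  have h2 := ((tendsto_inv_smul_pow_psd hTP hPos hP2).sub
    (tendsto_inv_smul_pow_psd hTP hPos hQ2)).const_smul Complex.I
  have := h1.add h2
  simpa using this

section withCesaro

variable (hinf : IsCesaroProj T Tinf)

include hinf

lemma hinf' : ∀ X, Tendsto (fun n : ℕ => Mn T n X) atTop (nhds (Tinf X)) := hinf

lemma trace_Tinf (hTP : IsTP T) (X : Matrix (Fin d) (Fin d) ℂ) :
    (Tinf X).trace = X.trace := by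
  have h1 : Tendsto (fun n : ℕ => (Mn T n X).trace) atTop (nhds (Tinf X).trace) :=
    ((continuous_id.matrix_trace).tendsto _).comp (hinf' hinf X)
  have h2 : ∀ n : ℕ, 1 ≤ n → (Mn T n X).trace = X.trace := by
    intro n hn
    rw [Mn, trace_smul, Matrix.trace_sum]
    rw [Finset.sum_congr rfl (fun k _ => pow_trace hTP (k + 1) X)]
    rw [Finset.sum_const, Finset.card_range, smul_eq_mul, nsmul_eq_mul]
    rw [← mul_assoc, inv_mul_cancel₀ (by exact_mod_cast Nat.one_le_iff_ne_zero.mp hn), one_mul]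
  have h3 : Tendsto (fun n : ℕ => (Mn T n X).trace) atTop (nhds X.trace) := by
    apply Tendsto.congr' _ tendsto_const_nhds
    filter_upwards [eventually_ge_atTop 1] with n hn
    exact (h2 n hn).symm
  exact tendsto_nhds_unique h1 h3

omit hinf in
lemma le_lim_complex {f : ℕ → ℂ} {z : ℂ} (h : Tendsto f atTop (nhds z))
    (h0 : ∀ n, 0 ≤ f n) : 0 ≤ z := by
  have hre : Tendsto (fun n => (f n).re) atTop (nhds z.re) :=
    (Complex.continuous_re.tendsto _).comp h
  have him : Tendsto (fun n => (f n).im) atTop (nhds z.im) :=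
    (Complex.continuous_im.tendsto _).comp h
  have h1 : ∀ n, 0 ≤ (f n).re := fun n => by
    have := (Complex.le_def.mp (h0 n)).1
    simpa using this
  have h2 : ∀ n, (f n).im = 0 := fun n => by
    have := (Complex.le_def.mp (h0 n)).2
    simpa using this.symm
  have h3 : 0 ≤ z.re := ge_of_tendsto' hre h1
  have h4 : z.im = 0 := by
    have hc : Tendsto (fun n => (f n).im) atTop (nhds 0) := by
      apply Tendsto.congr (fun n => (h2 n).symm) tendsto_const_nhds
    exact tendsto_nhds_unique him hc
  rw [Complex.le_def]
  constructor
  · simpa using h3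
  · simp [h4]

lemma pos_Tinf (hPos : IsPos T)
    {X : Matrix (Fin d) (Fin d) ℂ} (hX : X.PosSemidef) : (Tinf X).PosSemidef := by
  constructor
  · have h1 : Tendsto (fun n : ℕ => (Mn T n X)ᴴ) atTop (nhds (Tinf X)ᴴ) :=
      ((continuous_id.matrix_conjTranspose).tendsto _).comp (hinf' hinf X)
    have h2 : Tendsto (fun n : ℕ => (Mn T n X)ᴴ) atTop (nhds (Tinf X)) := by
      apply Tendsto.congr _ (hinf' hinf X)
      intro n
      exact ((Mn_psd hPos n hX).1.eq).symm
    exact tendsto_nhds_unique h1 h2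
  · intro x
    have hc : Continuous fun M : Matrix (Fin d) (Fin d) ℂ =>
        x.sum fun i xi => x.sum fun j xj => star xi * M i j * xj := by
      unfold Finsupp.sum
      apply continuous_finset_sum
      intro i _
      apply continuous_finset_sum
      intro j _
      exact (continuous_const.mul (continuous_id.matrix_elem i j)).mul continuous_const
    have h1 : Tendsto (fun n : ℕ => x.sum fun i xi => x.sum fun j xj => star xi * Mn T n X i j * xj)
        atTop (nhds (x.sum fun i xi => x.sum fun j xj => star xi * Tinf X i j * xj)) :=
      (hc.tendsto _).comp (hinf' hinf X)
    exact le_lim_complex h1 (fun n => (Mn_psd hPos n hX).2 x)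

lemma Tinf_hp (hHP : ∀ X, (T X)ᴴ = T Xᴴ) (X : Matrix (Fin d) (Fin d) ℂ) :
    (Tinf X)ᴴ = Tinf Xᴴ := by
  have h1 : Tendsto (fun n : ℕ => (Mn T n X)ᴴ) atTop (nhds (Tinf X)ᴴ) :=
    ((continuous_id.matrix_conjTranspose).tendsto _).comp (hinf' hinf X)
  have h2 : ∀ n : ℕ, (Mn T n X)ᴴ = Mn T n Xᴴ := by
    intro n
    rw [Mn, Mn, conjTranspose_smul, conjTranspose_sum]
    rw [Finset.sum_congr rfl (fun k _ => pow_hp hHP (k + 1) X)]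
    congr 1
    simp
  have h3 : Tendsto (fun n : ℕ => Mn T n Xᴴ) atTop (nhds (Tinf X)ᴴ) := by
    apply h1.congr
    intro n
    exact h2 n
  exact tendsto_nhds_unique h3 (hinf' hinf Xᴴ)

lemma T_comp_Tinf (hTP : IsTP T) (hPos : IsPos T) (X : Matrix (Fin d) (Fin d) ℂ) :
    T (Tinf X) = Tinf X := by
  have hcT : Continuous T := LinearMap.continuous_of_finiteDimensional T
  have h1 : Tendsto (fun n : ℕ => T (Mn T n X)) atTop (nhds (T (Tinf X))) :=
    (hcT.tendsto _).comp (hinf' hinf X)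
  have htel : ∀ m : ℕ, ∑ k ∈ Finset.range m, (T ^ (k + 1 + 1)) X
      = ∑ k ∈ Finset.range m, (T ^ (k + 1)) X + ((T ^ (m + 1)) X - (T ^ (0 + 1)) X) := by
    intro m
    induction m with
      | zero => simp
      | succ m ih =>
        rw [Finset.sum_range_succ, Finset.sum_range_succ
          (fun k => (T ^ (k + 1)) X), ih]
        abel
  have h2 : ∀ n : ℕ, T (Mn T n X) = Mn T n X + (n : ℂ)⁻¹ • ((T ^ (n + 1)) X - T X) := by
    intro n
    rw [Mn, _root_.map_smul, map_sum]
    have hterm : ∀ k, T ((T ^ (k + 1)) X) = (T ^ (k + 1 + 1)) X := by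
      intro k
      conv_rhs => rw [pow_succ']
      rw [Module.End.mul_apply]
    rw [Finset.sum_congr rfl (fun k _ => hterm k), htel n, smul_add]
    rw [show (T ^ (0 + 1)) X = T X from by rw [zero_add, pow_one]]
  have hb : Tendsto (fun n : ℕ => (n : ℂ)⁻¹ • T X) atTop (nhds 0) := by
    apply tendsto_inv_smul_of_bound (c := ∑ i, ∑ j, ‖(T X) i j‖)
    intro n i j
    calc ‖(T X) i j‖ ≤ ∑ j', ‖(T X) i j'‖ :=
          Finset.single_le_sum (fun m _ => norm_nonneg _) (Finset.mem_univ j)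
      _ ≤ ∑ i', ∑ j', ‖(T X) i' j'‖ :=
          Finset.single_le_sum (f := fun i' => ∑ j', ‖(T X) i' j'‖)
            (fun m _ => Finset.sum_nonneg fun _ _ => norm_nonneg _) (Finset.mem_univ i)
  have hcorr : Tendsto (fun n : ℕ => (n : ℂ)⁻¹ • ((T ^ (n + 1)) X - T X)) atTop (nhds 0) := by
    have := (tendsto_inv_smul_pow hTP hPos X).sub hb
    have heq : (fun n : ℕ => (n : ℂ)⁻¹ • (T ^ (n + 1)) X - (n : ℂ)⁻¹ • T X)
        = fun n : ℕ => (n : ℂ)⁻¹ • ((T ^ (n + 1)) X - T X) := by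
      funext n; rw [smul_sub]
    rw [heq] at this
    simpa using this
  have h3 : Tendsto (fun n : ℕ => T (Mn T n X)) atTop (nhds (Tinf X)) := by
    have := (hinf' hinf X).add hcorr
    rw [add_zero] at this
    apply this.congr
    intro n
    exact (h2 n).symm
  exact tendsto_nhds_unique h1 h3

/-- `Tinf` annihilates Hermitian traceless matrices (uniqueness of stationary state). -/
lemma Tinf_traceless (hTP : IsTP T) (hPos : IsPos T)
    (huniq : ∃! ρ : Matrix (Fin d) (Fin d) ℂ, IsDensity ρ ∧ T ρ = ρ)
    {w : Matrix (Fin d) (Fin d) ℂ} (hw : w.IsHermitian) (htr : w.trace = 0) :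
    Tinf w = 0 := by
  obtain ⟨P, Q, p, q, hP, hQ, hPQ, htP, htQ, hpq, hdiff⟩ := TNAux.jordan hw
  rw [htr] at hdiff
  have hpq' : p = q := by
    have : (p : ℂ) = (q : ℂ) := by linear_combination hdiff
    exact_mod_cast this
  have hTinfw : Tinf w = Tinf P - Tinf Q := by rw [hPQ, map_sub]
  by_cases hp : p = 0
  · have hPz : P = 0 := TNAux.psd_eq_zero_of_trace hP (by rw [htP, Complex.ofReal_re, hp])
    have hQz : Q = 0 := TNAux.psd_eq_zero_of_trace hQ
      (by rw [htQ, Complex.ofReal_re, ← hpq', hp])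
    rw [hTinfw, hPz, hQz, map_zero, sub_zero]
  · have hpnonneg : 0 ≤ p := by
      have hept : p = traceNorm P := by
        rw [TNAux.traceNorm_psd hP, htP, Complex.ofReal_re]
      rw [hept]
      exact TNAux.traceNorm_nonneg_herm hP.1
    -- the two candidate densities
    have hdens : ∀ R : Matrix (Fin d) (Fin d) ℂ, R.PosSemidef → R.trace = (p : ℂ) →
        IsDensity (((p⁻¹ : ℝ) : ℂ) • Tinf R) ∧ T (((p⁻¹ : ℝ) : ℂ) • Tinf R)
          = ((p⁻¹ : ℝ) : ℂ) • Tinf R := by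
      intro R hR htrR
      refine ⟨⟨psd_smul_real (pos_Tinf hinf hPos hR) (inv_nonneg.mpr hpnonneg), ?_⟩, ?_⟩
      · rw [trace_smul, smul_eq_mul, trace_Tinf hinf hTP, htrR]
        rw [← Complex.ofReal_mul, inv_mul_cancel₀ hp, Complex.ofReal_one]
      · rw [_root_.map_smul, T_comp_Tinf hinf hTP hPos]
    have h1 := hdens P hP htP
    have h2 := hdens Q hQ (by rw [htQ, hpq'])
    have heq := huniq.unique h1 h2
    have hPQeq : Tinf P = Tinf Q := by
      have hne : ((p⁻¹ : ℝ) : ℂ) ≠ 0 := by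
        simp only [ne_eq, Complex.ofReal_eq_zero, inv_eq_zero]
        exact hp
      exact smul_right_injective _ hne heq
    rw [hTinfw, hPQeq, sub_self]

end withCesaro
end CesaroAux

/-- `τ(Z(T)) ≤ 1/(1 − τ(T))` for a map with unique stationary state. -/
theorem tau_Z_le_inv_one_sub_tau {d : ℕ} (T Tinf Z : MatEnd d)
    (hTP : IsTP T) (hPos : IsPos T)
    (huniq : ∃! ρ : Matrix (Fin d) (Fin d) ℂ, IsDensity ρ ∧ T ρ = ρ)
    (hinf : IsCesaroProj T Tinf)
    (hZ₁ : Z * (1 - (T - Tinf)) = 1) (hZ₂ : (1 - (T - Tinf)) * Z = 1)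
    (htau : tau T < 1) : tau Z ≤ 1 / (1 - tau T) := by
  have h1t : 0 < 1 - tau T := by linarith
  have hBnn : 0 ≤ 1 / (1 - tau T) := (one_div_pos.mpr h1t).le
  have hTHP : ∀ X, (T X)ᴴ = T Xᴴ := TNAux.hp_of_pos hPos
  have hbdd : BddAbove {r | ∃ σ : Matrix (Fin d) (Fin d) ℂ,
      σ.IsHermitian ∧ σ.trace = 0 ∧ σ ≠ 0 ∧ r = traceNorm (T σ) / traceNorm σ} := by
    refine ⟨1, fun r hr => ?_⟩
    obtain ⟨σ, hσ, -, hne, rfl⟩ := hr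
    rw [div_le_one (TNAux.traceNorm_pos hσ hne)]
    exact TNAux.traceNorm_map_le hTP hPos hσ
  have hgoal : sSup {r | ∃ σ : Matrix (Fin d) (Fin d) ℂ,
      σ.IsHermitian ∧ σ.trace = 0 ∧ σ ≠ 0 ∧ r = traceNorm (Z σ) / traceNorm σ}
      ≤ 1 / (1 - tau T) := by
    apply Real.sSup_le _ hBnn
    rintro r ⟨σ, hσH, hσtr, hσne, rfl⟩
    have hcanc : ∀ y, Z ((1 - (T - Tinf)) y) = y := by
      intro y
      have h := congrArg (fun f : MatEnd d => f y) hZ₁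
      simpa [Module.End.mul_apply, Module.End.one_apply] using h
    have hsig : (1 - (T - Tinf)) (Z σ) = σ := by
      have h := congrArg (fun f : MatEnd d => f σ) hZ₂
      simpa [Module.End.mul_apply, Module.End.one_apply] using h
    have hexp : Z σ - (T (Z σ) - Tinf (Z σ)) = σ := by
      have h := hsig
      rwa [LinearMap.sub_apply, LinearMap.sub_apply, Module.End.one_apply] at h
    have htrw : (Z σ).trace = 0 := by
      have h := congrArg Matrix.trace hexp
      rw [trace_sub, trace_sub, hTP, CesaroAux.trace_Tinf hinf hTP, hσtr] at h
      simpa using h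
    have hTinfHP := CesaroAux.Tinf_hp hinf hTHP
    have hwh : (Z σ)ᴴ = Z σ := by
      have h5 : (1 - (T - Tinf)) ((Z σ)ᴴ) = σ := by
        rw [LinearMap.sub_apply, LinearMap.sub_apply, Module.End.one_apply, ← hTHP, ← hTinfHP,
          ← conjTranspose_sub, ← conjTranspose_sub, hexp, hσH.eq]
      calc (Z σ)ᴴ = Z ((1 - (T - Tinf)) ((Z σ)ᴴ)) := (hcanc _).symm
        _ = Z σ := by rw [h5]
    have hTinf0 : Tinf (Z σ) = 0 :=
      CesaroAux.Tinf_traceless hinf hTP hPos huniq hwh htrw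
    have hkey : Z σ = σ + T (Z σ) := by
      have h := hexp
      rw [hTinf0, sub_zero] at h
      exact sub_eq_iff_eq_add.mp h
    by_cases hw0 : Z σ = 0
    · rw [hw0, TNAux.traceNorm_zero, zero_div]
      exact hBnn
    · have hwherm : (Z σ).IsHermitian := hwh
      have hTwh : (T (Z σ)).IsHermitian := by
        rw [IsHermitian, hTHP, hwh]
      have h6 : traceNorm (Z σ) ≤ traceNorm σ + traceNorm (T (Z σ)) := by
        conv_lhs => rw [hkey]
        exact TNAux.traceNorm_add_le hσH hTwh
      have h7 : traceNorm (T (Z σ)) / traceNorm (Z σ) ≤ tau T :=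
        le_csSup hbdd ⟨Z σ, hwherm, htrw, hw0, rfl⟩
      have hwpos := TNAux.traceNorm_pos hwherm hw0
      rw [div_le_iff₀ hwpos] at h7
      have hσpos := TNAux.traceNorm_pos hσH hσne
      rw [div_le_div_iff₀ hσpos h1t]
      nlinarith [h6, h7]
  exact hgoal
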